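/- Under the hypotheses H(K_V), H(K_Q), H(A), H(b), H(Φ)₂, H(Ψ), H(f) and the smallness condition α_Φ + α_Ψ < m_A, the mixed variational-hemivariational inequality Problem: find (u,p) ∈ K_V × K_Q with ⟨Au, v−u⟩ + b(v−u, p) + Φ(u,v) − Φ(u,u) + Ψ⁰(u; v−u) ≥ ⟨f, v−u⟩ for all v ∈ K_V and b(u, q−p) ≤ 0 for all q ∈ K_Q, has at most one solution. -/

import Mathlib

open Filter

/-- The Clarke generalized directional derivative of `Ψ` at `u` in the direction `v`. -/
noncomputable def clarkeDeriv {V : Type*} [NormedAddCommGroup V] [NormedSpace ℝ V]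
    (Ψ : V → ℝ) (u v : V) : ℝ :=
  limsup (fun p : V × ℝ => (Ψ (p.1 + p.2 • v) - Ψ p.1) / p.2)
    ((nhds u) ×ˢ (nhdsWithin (0 : ℝ) (Set.Ioi 0)))

/-- Subadditivity-type estimate for the Clarke directional derivative of a locally
Lipschitz function. -/
lemma clarkeDeriv_add_le {V : Type*} [NormedAddCommGroup V] [NormedSpace ℝ V]
    {Ψ : V → ℝ} {u : V} {K : NNReal} {s : Set V} (hs : s ∈ nhds u)
    (hL : LipschitzOnWith K Ψ s) (w d : V) :
    clarkeDeriv Ψ u (w + d) ≤ clarkeDeriv Ψ u w + K * ‖d‖ := by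
  unfold clarkeDeriv
  set l := (nhds u) ×ˢ (nhdsWithin (0 : ℝ) (Set.Ioi 0)) with hl
  haveI : l.NeBot := by rw [hl]; infer_instance
  set F : V × ℝ → ℝ := fun p => (Ψ (p.1 + p.2 • (w + d)) - Ψ p.1) / p.2 with hF
  set G : V × ℝ → ℝ := fun p => (Ψ (p.1 + p.2 • w) - Ψ p.1) / p.2 with hG
  have ht2 : Tendsto (fun p : V × ℝ => p.2) l (nhds (0 : ℝ)) :=
    tendsto_snd.mono_right nhdsWithin_le_nhds
  have hxy : ∀ v : V, Tendsto (fun p : V × ℝ => p.1 + p.2 • v) l (nhds u) := by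
    intro v
    have := Filter.Tendsto.add (tendsto_fst (f := nhds u) (g := nhdsWithin (0:ℝ) (Set.Ioi 0)))
      (ht2.smul_const v)
    simpa using this
  have hpos : ∀ᶠ p : V × ℝ in l, 0 < p.2 :=
    tendsto_snd.eventually_mem self_mem_nhdsWithin
  have hmem0 : ∀ᶠ p : V × ℝ in l, p.1 ∈ s := tendsto_fst.eventually_mem hs
  have hmemwd : ∀ᶠ p : V × ℝ in l, p.1 + p.2 • (w + d) ∈ s := (hxy (w + d)).eventually_mem hs
  have hmemw : ∀ᶠ p : V × ℝ in l, p.1 + p.2 • w ∈ s := (hxy w).eventually_mem hs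
  -- pointwise inequality
  have hFG : ∀ᶠ p in l, F p ≤ G p + K * ‖d‖ := by
    filter_upwards [hpos, hmemwd, hmemw] with p hp hwd hw'
    have hdist := hL.dist_le_mul _ hwd _ hw'
    have hdd : dist (p.1 + p.2 • (w + d)) (p.1 + p.2 • w) = p.2 * ‖d‖ := by
      rw [dist_eq_norm]
      have : p.1 + p.2 • (w + d) - (p.1 + p.2 • w) = p.2 • d := by
        rw [smul_add]; abel
      rw [this, norm_smul, Real.norm_eq_abs, abs_of_pos hp]
    have h1 : Ψ (p.1 + p.2 • (w + d)) - Ψ (p.1 + p.2 • w) ≤ K * (p.2 * ‖d‖) := by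
      calc Ψ (p.1 + p.2 • (w + d)) - Ψ (p.1 + p.2 • w)
          ≤ dist (Ψ (p.1 + p.2 • (w + d))) (Ψ (p.1 + p.2 • w)) := by
            rw [Real.dist_eq]; exact le_abs_self _
        _ ≤ K * dist (p.1 + p.2 • (w + d)) (p.1 + p.2 • w) := hdist
        _ = K * (p.2 * ‖d‖) := by rw [hdd]
    have hsplit : F p = G p + (Ψ (p.1 + p.2 • (w + d)) - Ψ (p.1 + p.2 • w)) / p.2 := by
      rw [hF, hG]
      simp only
      rw [← add_div]
      congr 1
      ring
    rw [hsplit]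
    gcongr
    rw [div_le_iff₀ hp]
    calc Ψ (p.1 + p.2 • (w + d)) - Ψ (p.1 + p.2 • w) ≤ K * (p.2 * ‖d‖) := h1
      _ = K * ‖d‖ * p.2 := by ring
  -- boundedness facts
  have hFlow : ∀ᶠ p in l, -(K * ‖w + d‖) ≤ F p := by
    filter_upwards [hpos, hmem0, hmemwd] with p hp h0 hwd
    have hdist := hL.dist_le_mul _ hwd _ h0
    have hdd : dist (p.1 + p.2 • (w + d)) p.1 = p.2 * ‖w + d‖ := by
      rw [dist_eq_norm]
      have : p.1 + p.2 • (w + d) - p.1 = p.2 • (w + d) := by abel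
      rw [this, norm_smul, Real.norm_eq_abs, abs_of_pos hp]
    have h1 : -(K * (p.2 * ‖w + d‖)) ≤ Ψ (p.1 + p.2 • (w + d)) - Ψ p.1 := by
      have := neg_abs_le (Ψ (p.1 + p.2 • (w + d)) - Ψ p.1)
      have h2 : |Ψ (p.1 + p.2 • (w + d)) - Ψ p.1| ≤ K * (p.2 * ‖w + d‖) := by
        rw [← Real.dist_eq, ← hdd]; exact hdist
      linarith
    rw [hF]; simp only
    rw [le_div_iff₀ hp]
    calc -(K * ‖w + d‖) * p.2 = -(K * (p.2 * ‖w + d‖)) := by ring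
      _ ≤ _ := h1
  have hGhigh : ∀ᶠ p in l, G p ≤ K * ‖w‖ := by
    filter_upwards [hpos, hmem0, hmemw] with p hp h0 hw'
    have hdist := hL.dist_le_mul _ hw' _ h0
    have hdd : dist (p.1 + p.2 • w) p.1 = p.2 * ‖w‖ := by
      rw [dist_eq_norm]
      have : p.1 + p.2 • w - p.1 = p.2 • w := by abel
      rw [this, norm_smul, Real.norm_eq_abs, abs_of_pos hp]
    have h1 : Ψ (p.1 + p.2 • w) - Ψ p.1 ≤ K * (p.2 * ‖w‖) := by
      have h2 : |Ψ (p.1 + p.2 • w) - Ψ p.1| ≤ K * (p.2 * ‖w‖) := by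
        rw [← Real.dist_eq, ← hdd]; exact hdist
      have := le_abs_self (Ψ (p.1 + p.2 • w) - Ψ p.1)
      linarith
    rw [hG]; simp only
    rw [div_le_iff₀ hp]
    calc Ψ (p.1 + p.2 • w) - Ψ p.1 ≤ K * (p.2 * ‖w‖) := h1
      _ = K * ‖w‖ * p.2 := by ring
  have hGlow : ∀ᶠ p in l, -(K * ‖w‖) ≤ G p := by
    filter_upwards [hpos, hmem0, hmemw] with p hp h0 hw'
    have hdist := hL.dist_le_mul _ hw' _ h0
    have hdd : dist (p.1 + p.2 • w) p.1 = p.2 * ‖w‖ := by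
      rw [dist_eq_norm]
      have : p.1 + p.2 • w - p.1 = p.2 • w := by abel
      rw [this, norm_smul, Real.norm_eq_abs, abs_of_pos hp]
    have h1 : -(K * (p.2 * ‖w‖)) ≤ Ψ (p.1 + p.2 • w) - Ψ p.1 := by
      have h2 : |Ψ (p.1 + p.2 • w) - Ψ p.1| ≤ K * (p.2 * ‖w‖) := by
        rw [← Real.dist_eq, ← hdd]; exact hdist
      have := neg_abs_le (Ψ (p.1 + p.2 • w) - Ψ p.1)
      linarith
    rw [hG]; simp only
    rw [le_div_iff₀ hp]
    calc -(K * ‖w‖) * p.2 = -(K * (p.2 * ‖w‖)) := by ring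
      _ ≤ _ := h1
  have hGbdd : l.IsBoundedUnder (· ≤ ·) G := isBoundedUnder_of_eventually_le hGhigh
  have hGcobdd : l.IsCoboundedUnder (· ≤ ·) G :=
    isCoboundedUnder_le_of_eventually_le l hGlow
  have hFcobdd : l.IsCoboundedUnder (· ≤ ·) F :=
    isCoboundedUnder_le_of_eventually_le l hFlow
  have hGc_bdd : l.IsBoundedUnder (· ≤ ·) (fun p => G p + K * ‖d‖) := by
    apply isBoundedUnder_of_eventually_le (a := K * ‖w‖ + K * ‖d‖)
    filter_upwards [hGhigh] with p hp using by linarith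
  have e1 : limsup F l ≤ limsup (fun p => G p + (K:ℝ) * ‖d‖) l :=
    limsup_le_limsup hFG hFcobdd hGc_bdd
  have e2 : limsup (fun p => G p + (K:ℝ) * ‖d‖) l = limsup G l + (K:ℝ) * ‖d‖ :=
    limsup_add_const l G ((K:ℝ) * ‖d‖) hGbdd hGcobdd
  exact e1.trans_eq e2

set_option maxHeartbeats 2000000 in
/-- Under `H(K_V)`, `H(K_Q)`, `H(A)`, `H(b)`, `H(Φ)₂`, `H(Ψ)`, `H(f)` and the smallness
condition `α_Φ + α_Ψ < m_A`, the mixed variational-hemivariational inequality Problem has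
at most one solution. -/
theorem mixed_vhvi_uniqueness
    {V Q : Type*} [NormedAddCommGroup V] [InnerProductSpace ℝ V] [CompleteSpace V]
    [NormedAddCommGroup Q] [InnerProductSpace ℝ Q] [CompleteSpace Q]
    -- H(K_V)
    (K_V : Set V) (hKV : K_V.Nonempty) (hKVc : IsClosed K_V) (hKVconv : Convex ℝ K_V)
    (V₀ : Submodule ℝ V) (hV₀ : (V₀ : Set V) ⊆ K_V)
    -- H(K_Q)
    (K_Q : Set Q) (hKQ : K_Q.Nonempty) (hKQc : IsClosed K_Q) (hKQconv : Convex ℝ K_Q)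
    -- H(A)
    (A : V → V →L[ℝ] ℝ) (m_A M_A : ℝ) (hmA : 0 < m_A) (hMA : 0 < M_A)
    (hA_lip : ∀ v₁ v₂ : V, ‖A v₁ - A v₂‖ ≤ M_A * ‖v₁ - v₂‖)
    (hA_mono : ∀ v₁ v₂ : V, m_A * ‖v₁ - v₂‖ ^ 2 ≤ (A v₁ - A v₂) (v₁ - v₂))
    -- H(b)
    (b : V →ₗ[ℝ] Q →ₗ[ℝ] ℝ) (M_b : ℝ) (hMb : 0 < M_b)
    (hb_bd : ∀ (v : V) (q : Q), |b v q| ≤ M_b * ‖v‖ * ‖q‖)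
    (α_b : ℝ) (hαb : 0 < α_b)
    (hinfsup : ∀ q : Q, α_b * ‖q‖ ≤ ⨆ w : {w : V // w ∈ V₀ ∧ w ≠ 0}, b w q / ‖(w : V)‖)
    -- H(Φ)₂
    (Φ : V → V → ℝ) (α_Φ : ℝ) (hαΦ : 0 ≤ α_Φ)
    (hΦconv : ∀ u : V, ConvexOn ℝ Set.univ (Φ u))
    (hΦcont : ∀ u : V, Continuous (Φ u))
    (hΦ : ∀ u₁ u₂ v₁ v₂ : V,
      Φ u₁ v₂ - Φ u₁ v₁ + Φ u₂ v₁ - Φ u₂ v₂ ≤ α_Φ * ‖u₁ - u₂‖ * ‖v₁ - v₂‖)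
    (hΦinv : ∀ u : V, ∀ v ∈ K_V, ∀ w ∈ V₀, Φ u (v + w) = Φ u v)
    -- H(Ψ)
    (Ψ : V → ℝ) (hΨ_lip : LocallyLipschitz Ψ) (α_Ψ : ℝ) (hαΨ : 0 ≤ α_Ψ)
    (hΨ : ∀ v₁ v₂ : V,
      clarkeDeriv Ψ v₁ (v₂ - v₁) + clarkeDeriv Ψ v₂ (v₁ - v₂) ≤ α_Ψ * ‖v₁ - v₂‖ ^ 2)
    (hΨ₀ : ∀ v ∈ K_V, ∀ w ∈ V₀, clarkeDeriv Ψ v w = 0)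
    -- H(f) and smallness
    (f : V →L[ℝ] ℝ) (hsmall : α_Φ + α_Ψ < m_A)
    -- two solutions
    (u₁ u₂ : V) (hu₁ : u₁ ∈ K_V) (hu₂ : u₂ ∈ K_V)
    (p₁ p₂ : Q) (hp₁ : p₁ ∈ K_Q) (hp₂ : p₂ ∈ K_Q)
    (hsol₁ : ∀ v ∈ K_V,
      A u₁ (v - u₁) + b (v - u₁) p₁ + Φ u₁ v - Φ u₁ u₁ + clarkeDeriv Ψ u₁ (v - u₁)
        ≥ f (v - u₁))
    (hconstr₁ : ∀ q ∈ K_Q, b u₁ (q - p₁) ≤ 0)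
    (hsol₂ : ∀ v ∈ K_V,
      A u₂ (v - u₂) + b (v - u₂) p₂ + Φ u₂ v - Φ u₂ u₂ + clarkeDeriv Ψ u₂ (v - u₂)
        ≥ f (v - u₂))
    (hconstr₂ : ∀ q ∈ K_Q, b u₂ (q - p₂) ≤ 0) :
    u₁ = u₂ ∧ p₁ = p₂ := by
    -- Step 1: u₁ = u₂
  have huv : u₁ = u₂ := by
    have h1 := hsol₁ u₂ hu₂
    have h2 := hsol₂ u₁ hu₁
    have hb1 : b u₁ (p₂ - p₁) ≤ 0 := hconstr₁ p₂ hp₂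
    have hb2 : b u₂ (p₁ - p₂) ≤ 0 := hconstr₂ p₁ hp₁
    have hmono := hA_mono u₁ u₂
    have hΦ' := hΦ u₁ u₂ u₁ u₂
    have hΨ' := hΨ u₁ u₂
    have eA : (A u₁ - A u₂) (u₁ - u₂)
        = A u₁ u₁ - A u₁ u₂ - A u₂ u₁ + A u₂ u₂ := by
      simp only [ContinuousLinearMap.sub_apply, map_sub]; ring
    have eA1 : A u₁ (u₂ - u₁) = A u₁ u₂ - A u₁ u₁ := map_sub _ _ _
    have eA2 : A u₂ (u₁ - u₂) = A u₂ u₁ - A u₂ u₂ := map_sub _ _ _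
    have eb1 : b (u₂ - u₁) p₁ = b u₂ p₁ - b u₁ p₁ := by
      rw [map_sub, LinearMap.sub_apply]
    have eb2 : b (u₁ - u₂) p₂ = b u₁ p₂ - b u₂ p₂ := by
      rw [map_sub, LinearMap.sub_apply]
    have eb1' : b u₁ (p₂ - p₁) = b u₁ p₂ - b u₁ p₁ := map_sub _ _ _
    have eb2' : b u₂ (p₁ - p₂) = b u₂ p₁ - b u₂ p₂ := map_sub _ _ _
    have ef1 : f (u₂ - u₁) = f u₂ - f u₁ := map_sub _ _ _
    have ef2 : f (u₁ - u₂) = f u₁ - f u₂ := map_sub _ _ _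
    have hpow : ‖u₁ - u₂‖ ^ 2 = ‖u₁ - u₂‖ * ‖u₁ - u₂‖ := sq ‖u₁ - u₂‖
    have key : (m_A - α_Φ - α_Ψ) * ‖u₁ - u₂‖ ^ 2 ≤ 0 := by
      rw [eA] at hmono
      rw [eA1, eb1, ef1] at h1
      rw [eA2, eb2, ef2] at h2
      rw [eb1'] at hb1
      rw [eb2'] at hb2
      rw [hpow] at hΨ' hmono ⊢
      nlinarith [h1, h2, hb1, hb2, hmono, hΦ', hΨ']
    have hpos : 0 < m_A - α_Φ - α_Ψ := by linarith
    have hge : 0 ≤ (m_A - α_Φ - α_Ψ) * ‖u₁ - u₂‖ ^ 2 :=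
      mul_nonneg hpos.le (sq_nonneg _)
    have hz : (m_A - α_Φ - α_Ψ) * ‖u₁ - u₂‖ ^ 2 = 0 := le_antisymm key hge
    have hsq : ‖u₁ - u₂‖ ^ 2 = 0 := by
      rcases mul_eq_zero.mp hz with h | h
      · exact absurd h (ne_of_gt hpos)
      · exact h
    have : ‖u₁ - u₂‖ = 0 := pow_eq_zero_iff (by norm_num : (2:ℕ) ≠ 0) |>.mp hsq
    exact sub_eq_zero.mp (norm_eq_zero.mp this)
  subst huv
  refine ⟨rfl, ?_⟩
  -- Step 2: p₁ = p₂
  obtain ⟨K, s, hs, hK⟩ := hΨ_lip u₁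
  have key : ∀ p : Q, (∀ v ∈ K_V,
      A u₁ (v - u₁) + b (v - u₁) p + Φ u₁ v - Φ u₁ u₁ + clarkeDeriv Ψ u₁ (v - u₁)
        ≥ f (v - u₁)) → ∀ w ∈ V₀, f w - A u₁ w ≤ b w p := by
    intro p hsol w hw
    set φ : ℝ → ℝ := fun t =>
      (A u₁ w - t * A u₁ u₁) + (b w p - t * b u₁ p)
        + (Φ u₁ ((1 - t) • u₁ + w) - Φ u₁ u₁) + (K : ℝ) * (t * ‖u₁‖)
        - (f w - t * f u₁) with hφ
    have hineq : ∀ t ∈ Set.Ioc (0:ℝ) 1, 0 ≤ φ t := by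
      rintro t ⟨ht0, ht1⟩
      have hv : (1 - t) • u₁ + w ∈ K_V := by
        have hw' : t⁻¹ • w ∈ V₀ := V₀.smul_mem _ hw
        have hc := hKVconv hu₁ (hV₀ hw') (by linarith : (0:ℝ) ≤ 1 - t) ht0.le (by ring)
        simpa [smul_smul, mul_inv_cancel₀ (ne_of_gt ht0)] using hc
      have h := hsol _ hv
      have hvu : (1 - t) • u₁ + w - u₁ = w - t • u₁ := by
        rw [sub_smul, one_smul]; abel
      rw [hvu] at h
      have hCd : clarkeDeriv Ψ u₁ (w - t • u₁) ≤ (K : ℝ) * (t * ‖u₁‖) := by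
        have h0 : clarkeDeriv Ψ u₁ w = 0 := hΨ₀ u₁ hu₁ w hw
        have hcd := clarkeDeriv_add_le hs hK w (-(t • u₁))
        rw [h0, zero_add] at hcd
        have e1 : w + -(t • u₁) = w - t • u₁ := (sub_eq_add_neg w (t • u₁)).symm
        have e2 : ‖-(t • u₁)‖ = t * ‖u₁‖ := by
          rw [norm_neg, norm_smul, Real.norm_eq_abs, abs_of_pos ht0]
        rw [e1, e2] at hcd
        exact hcd
      have eA : A u₁ (w - t • u₁) = A u₁ w - t * A u₁ u₁ := by
        rw [map_sub, map_smul, smul_eq_mul]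
      have eb : b (w - t • u₁) p = b w p - t * b u₁ p := by
        rw [map_sub, map_smul, LinearMap.sub_apply, LinearMap.smul_apply, smul_eq_mul]
      have ef : f (w - t • u₁) = f w - t * f u₁ := by
        rw [map_sub, map_smul, smul_eq_mul]
      rw [eA, eb, ef] at h
      rw [hφ]
      simp only
      linarith
    have hc0 : Continuous fun t : ℝ => (1 - t) • u₁ + w :=
      ((continuous_const.sub continuous_id).smul continuous_const).add continuous_const
    have hc1 : Continuous fun t : ℝ => Φ u₁ ((1 - t) • u₁ + w) := (hΦcont u₁).comp hc0
    have c_lin : ∀ c₀ c₁ : ℝ, Continuous fun t : ℝ => c₀ - t * c₁ := fun c₀ c₁ =>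
      continuous_const.sub (continuous_id.mul continuous_const)
    have hφcont : Continuous φ := by
      rw [hφ]
      exact ((((c_lin _ _).add (c_lin _ _)).add (hc1.sub continuous_const)).add
        (continuous_const.mul (continuous_id.mul continuous_const))).sub (c_lin _ _)
    have hlim : Filter.Tendsto φ (nhdsWithin 0 (Set.Ioi 0)) (nhds (φ 0)) :=
      (hφcont.tendsto 0).mono_left nhdsWithin_le_nhds
    have hev : ∀ᶠ t in nhdsWithin (0:ℝ) (Set.Ioi 0), 0 ≤ φ t := by
      filter_upwards [Filter.mem_of_superset (Ioc_mem_nhdsGT_of_mem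
        (Set.mem_Ico.mpr ⟨le_refl 0, zero_lt_one⟩)) (fun x hx => hx)] with t ht
      exact hineq t ht
    have h0 : 0 ≤ φ 0 := ge_of_tendsto hlim hev
    have hΦz : Φ u₁ (u₁ + w) - Φ u₁ u₁ = 0 := by
      rw [hΦinv u₁ u₁ hu₁ w hw]; ring
    have hφ0 := congrFun hφ 0
    simp only [zero_mul, mul_zero, sub_zero, add_zero, one_smul, hΦz] at hφ0
    rw [hφ0] at h0
    linarith
  have hbeq : ∀ w ∈ V₀, b w p₁ = b w p₂ := by
    intro w hw
    have h1 := key p₁ hsol₁ w hw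
    have h2 := key p₂ hsol₂ w hw
    have h1' := key p₁ hsol₁ (-w) (neg_mem hw)
    have h2' := key p₂ hsol₂ (-w) (neg_mem hw)
    have eb1 : b (-w) p₁ = -(b w p₁) := by rw [map_neg, LinearMap.neg_apply]
    have eb2 : b (-w) p₂ = -(b w p₂) := by rw [map_neg, LinearMap.neg_apply]
    have eA : A u₁ (-w) = -(A u₁ w) := map_neg _ _
    have ef : f (-w) = -(f w) := map_neg _ _
    rw [eb1, eA, ef] at h1'
    rw [eb2, eA, ef] at h2'
    linarith
  have hsup : (⨆ w : {w : V // w ∈ V₀ ∧ w ≠ 0}, b w (p₁ - p₂) / ‖(w : V)‖) ≤ 0 := by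
    apply Real.iSup_le _ le_rfl
    rintro ⟨w, hw, -⟩
    have : b w (p₁ - p₂) = 0 := by
      rw [map_sub, hbeq w hw, sub_self]
    simp [this]
  have hle := (hinfsup (p₁ - p₂)).trans hsup
  have : ‖p₁ - p₂‖ = 0 := by
    nlinarith [norm_nonneg (p₁ - p₂)]
  exact sub_eq_zero.mp (norm_eq_zero.mp this)
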